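/- arXiv:2412.14911 — 9 statements merged into one kernel-verified Lean document; each statement's English description precedes it below -/
import Mathlib

section
/- In every K-algebra, every element x satisfies x ∨ J₂x = x. -/
/-- The operations of a Bochvar-type algebra ⟨A, ∨, ¬, J₂, 0, 1⟩. -/
class KOps (α : Type*) where
  sup : α → α → α
  neg : α → α
  J : α → α
  zero : α
  one : α

namespace KOps

variable {α : Type*} [KOps α]

/-- The meet, defined à la De Morgan: x ∧ y := ¬(¬x ∨ ¬y). -/
def meet (x y : α) : α := neg (sup (neg x) (neg y))

end KOps

open KOps

/-- A K-algebra: an algebra satisfying the identities K1–K12 axiomatising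
the variety generated by Bochvar algebras. (K5 holds by definition of `meet`.) -/
class KAlgebra (α : Type*) [KOps α] : Prop where
  K1 : ∀ x : α, sup x x = x
  K2 : ∀ x y : α, sup x y = sup y x
  K3 : ∀ x y z : α, sup (sup x y) z = sup x (sup y z)
  K4 : ∀ x : α, neg (neg x) = x
  K5 : ∀ x y : α, meet x y = neg (sup (neg x) (neg y))
  K6 : ∀ x y : α, meet x (sup (neg x) y) = meet x y
  K7 : ∀ x : α, sup zero x = x
  K8 : (one : α) = neg zero
  K9 : ∀ x : α, sup (J x) (neg (J x)) = one
  K10 : ∀ x y : α, sup x (J y) = sup x (J (sup x y))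
  K11 : ∀ x : α, meet x (J x) = x
  K12 : ∀ x : α, J (meet x (neg x)) = zero

/-- In every K-algebra, x ∨ J₂x = x. -/
theorem stmt1 {α : Type*} [KOps α] [KAlgebra α] (x : α) : sup x (J x) = x := by
  have hJ0 : J (zero : α) = zero := by
    have h := KAlgebra.K12 (zero : α)
    have hm : meet (zero : α) (neg zero) = zero := by
      rw [KAlgebra.K5, KAlgebra.K2, KAlgebra.K4, KAlgebra.K7, KAlgebra.K4]
    rwa [hm] at h
  have h := KAlgebra.K10 x (zero : α)
  rw [hJ0, KAlgebra.K2 x zero, KAlgebra.K7] at h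
  exact h.symm
end

section
/- In every K-algebra, every element x satisfies x = J₂x ∨ (x ∧ ¬x). -/
open KOps

section Aux

variable {α : Type*} [KOps α] [KAlgebra α]

open KAlgebra

private lemma neg_sup' (p q : α) : neg (sup p q) = meet (neg p) (neg q) := by
  rw [K5, K4, K4]

private lemma neg_meet' (p q : α) : neg (meet p q) = sup (neg p) (neg q) := by
  rw [K5, K4]

private lemma meet_comm' (p q : α) : meet p q = meet q p := by
  rw [K5, K5, K2]

private lemma meet_idem' (p : α) : meet p p = p := by
  rw [K5, K1, K4]

/-- x ∨ (¬x ∧ y) = x ∨ y. -/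
private lemma lemD (u v : α) : sup u (meet (neg u) v) = sup u v := by
  have h : neg (sup u (meet (neg u) v)) = neg (sup u v) := by
    rw [neg_sup', neg_meet', K4, neg_sup']
    calc meet (neg u) (sup u (neg v))
        = meet (neg u) (sup (neg (neg u)) (neg v)) := by rw [K4]
      _ = meet (neg u) (neg v) := K6 _ _
  calc sup u (meet (neg u) v)
      = neg (neg (sup u (meet (neg u) v))) := (K4 _).symm
    _ = neg (neg (sup u v)) := by rw [h]
    _ = sup u v := K4 _

/-- x ∨ (x ∧ ¬x) = x. -/
private lemma absorb (x : α) : sup x (meet x (neg x)) = x := by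
  have h : neg (sup x (meet x (neg x))) = neg x := by
    rw [neg_sup', neg_meet', K4]
    calc meet (neg x) (sup (neg x) x)
        = meet (neg x) (sup x (neg x)) := by rw [K2 (neg x) x]
      _ = meet (neg x) (sup (neg (neg x)) (neg x)) := by rw [K4]
      _ = meet (neg x) (neg x) := K6 _ _
      _ = neg x := meet_idem' _
  calc sup x (meet x (neg x))
      = neg (neg (sup x (meet x (neg x)))) := (K4 _).symm
    _ = neg (neg x) := by rw [h]
    _ = x := K4 _

/-- x ∨ J x = x. -/
private lemma sup_J (x : α) : sup x (J x) = x := by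
  calc sup x (J x)
      = sup x (J (sup x (meet x (neg x)))) := by rw [absorb]
    _ = sup x (J (meet x (neg x))) := (K10 _ _).symm
    _ = sup x zero := by rw [K12]
    _ = sup zero x := K2 _ _
    _ = x := K7 _

end Aux

/-- In every K-algebra, x = J₂x ∨ (x ∧ ¬x). -/
theorem stmt2 {α : Type*} [KOps α] [KAlgebra α] (x : α) :
    x = sup (J x) (meet x (neg x)) := by
  open KAlgebra in
  have hnx : neg x = sup (neg x) (neg (J x)) := by
    conv_lhs => rw [← K11 x]
    rw [neg_meet']
  have hm : meet x (neg x) = meet x (neg (J x)) := by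
    rw [hnx, K6]
  calc x = sup x (J x) := (sup_J x).symm
    _ = sup (J x) x := K2 _ _
    _ = sup (J x) (meet (neg (J x)) x) := by rw [lemD]
    _ = sup (J x) (meet x (neg (J x))) := by rw [meet_comm']
    _ = sup (J x) (meet x (neg x)) := by rw [hm]
end

section
/- In every K-algebra, every pair of elements x, y satisfies x ∨ ¬J₂y = x ∨ ¬J₂(x ∨ y). -/
open KOps

lemma absorb_neg {α : Type*} [KOps α] [KAlgebra α] (x y : α) :
    sup x (neg (sup x y)) = sup x (neg y) := by
  have h := KAlgebra.K6 (neg x) y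
  unfold KOps.meet at h
  have h' := congrArg KOps.neg h
  rw [KAlgebra.K4, KAlgebra.K4] at h'
  rw [KAlgebra.K4] at h'
  exact h'

/-- In every K-algebra, x ∨ ¬J₂y = x ∨ ¬J₂(x ∨ y). -/
theorem stmt4 {α : Type*} [KOps α] [KAlgebra α] (x y : α) :
    sup x (neg (J y)) = sup x (neg (J (sup x y))) := by
  rw [← absorb_neg x (J y), ← absorb_neg x (J (sup x y)), KAlgebra.K10]
end

section
/- In every K-algebra A and for every fixed element a, the relation Θ_a = {(b,c) : a∨b = a∨c and a∨¬b = a∨¬c} is compatible with J₂; that is, if a∨b = a∨c and a∨¬b = a∨¬c, then a∨J₂b = a∨J₂c and a∨¬J₂b = a∨¬J₂c. -/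
open KOps

section Aux
variable {α : Type*} [KOps α] [KAlgebra α]

open KAlgebra

/-- Derived identity: x ∨ ¬(x∨y) = x ∨ ¬y (from K6 by negation). -/
lemma star (x y : α) : sup x (neg (sup x y)) = sup x (neg y) := by
  have h := K6 (neg x) y
  simp only [KOps.meet, K4] at h
  have := congrArg neg h
  simpa [K4] using this

/-- Derived identity: x ∨ ¬J y = x ∨ ¬J(x∨y). -/
lemma starJ (x y : α) : sup x (neg (J y)) = sup x (neg (J (sup x y))) := by
  calc sup x (neg (J y)) = sup x (neg (sup x (J y))) := (star x (J y)).symm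
    _ = sup x (neg (sup x (J (sup x y)))) := by rw [K10]
    _ = sup x (neg (J (sup x y))) := star x _

end Aux

/-- The relation Θ_a is compatible with J₂. -/
theorem stmt5 {α : Type*} [KOps α] [KAlgebra α] (a b c : α)
    (h1 : sup a b = sup a c) (h2 : sup a (neg b) = sup a (neg c)) :
    sup a (J b) = sup a (J c) ∧ sup a (neg (J b)) = sup a (neg (J c)) := by
  constructor
  · rw [KAlgebra.K10 a b, KAlgebra.K10 a c, h1]
  · rw [starJ a b, starJ a c, h1]
end

section
/- In any K-algebra in which J₂x = x holds for all x (a Boolean member), the binary term φ(x,y) := J₂x ∨ (J₂x ∧ y) satisfies φ(x,y) = x for all x, y; and in any K-algebra in which J₂x = 1 holds for all x (a semilattice member), φ(x,y) = y for all x, y. Hence the term φ witnesses independence of the subvarieties BA and SL of V(BCA). -/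
open KOps

/-- The term φ(x,y) := J₂x ∨ (J₂x ∧ y) witnesses independence of BA and SL. -/
theorem stmt9 {α : Type*} [KOps α] [KAlgebra α] :
    ((∀ x : α, J x = x) → ∀ x y : α, sup (J x) (meet (J x) y) = x) ∧
    ((∀ x : α, J x = one) → ∀ x y : α, sup (J x) (meet (J x) y) = y) := by
  obtain ⟨K1, K2, K3, K4, K5, K6, K7, K8, K9, K10, K11, K12⟩ := ‹KAlgebra α›
  constructor
  · intro h x y
    rw [h x]
    -- dual of K6
    have dual : ∀ a b : α, sup a (meet (neg a) b) = sup a b := by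
      intro a b
      have h6 := K6 (neg a) (neg b)
      rw [K4] at h6
      have := congrArg neg h6
      simp only [meet, K4] at this ⊢
      rw [this]
    have lem : ∀ z : α, sup z (neg z) = one := by
      intro z; have := K9 z; rwa [h z] at this
    have one_sup : ∀ z : α, sup one z = one := by
      intro z
      rw [← lem z, K2 z (neg z), K3, K1]
    have negone : neg (one : α) = zero := by rw [K8, K4]
    have zero_meet : ∀ z : α, meet zero z = zero := by
      intro z
      rw [meet, ← K8, one_sup, negone]
    have xnx : meet x (neg x) = zero := by
      have := K12 x; rwa [h (meet x (neg x))] at this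
    have massoc : meet (neg x) (meet x y) = meet (meet (neg x) x) y := by
      simp only [meet, K4, K3]
    have key : sup x (meet x y) = sup x zero := by
      have mcomm : meet (neg x) x = meet x (neg x) := by
        simp only [meet]; rw [K2]
      rw [← dual x (meet x y), massoc, mcomm, xnx, zero_meet]
    rw [key, K2, K7]
  · intro h x y
    have h01 : (zero : α) = one := by rw [← K12 zero, h]
    have negone : neg (one : α) = one := by
      conv_lhs => rw [K8, K4]
      exact h01
    rw [h x, ← h01, K7, meet, ← K8, ← h01, K7, K4]
end

section
/- A K-algebra satisfies J₂x = x for all x if and only if it satisfies x ∧ ¬x = 0 for all x (i.e., its ⟨∨,¬,0,1⟩-reduct is a Boolean algebra). -/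
open KOps

/-- A K-algebra satisfies J₂x = x for all x iff it satisfies x ∧ ¬x = 0 for all x. -/
theorem stmt10 {α : Type*} [KOps α] [KAlgebra α] :
    (∀ x : α, J x = x) ↔ (∀ x : α, meet x (neg x) = zero) := by
  constructor
  · intro h x
    have := KAlgebra.K12 x
    rwa [h] at this
  · intro h x
    have K1 := KAlgebra.K1 (α := α)
    have K2 := KAlgebra.K2 (α := α)
    have K3 := KAlgebra.K3 (α := α)
    have K4 := KAlgebra.K4 (α := α)
    have K6 := KAlgebra.K6 (α := α)
    have K7 := KAlgebra.K7 (α := α)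
    have K8 := KAlgebra.K8 (α := α)
    have K9 := KAlgebra.K9 (α := α)
    have K10 := KAlgebra.K10 (α := α)
    have K11 := KAlgebra.K11 (α := α)
    have K12 := KAlgebra.K12 (α := α)
    have hm : ∀ a b : α, meet a b = neg (sup (neg a) (neg b)) := fun _ _ => rfl
    have hsz : ∀ a : α, sup a zero = a := fun a => by rw [K2, K7]
    -- J 0 = 0
    have hJ0 : J (zero : α) = zero := by
      have := K12 (zero : α)
      rwa [h] at this
    -- a ∨ ¬a = 1
    have hcomp : ∀ a : α, sup a (neg a) = one := by
      intro a
      have h1 : neg (meet a (neg a)) = neg zero := by rw [h a]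
      rw [hm, K4, K4, K2, ← K8] at h1
      exact h1
    -- a ∨ 1 = 1
    have hone : ∀ a : α, sup a one = one := by
      intro a
      rw [← hcomp a, ← K3, K1]
    -- a ∨ J a = a
    have hB : ∀ a : α, sup a (J a) = a := by
      intro a
      have := K10 a zero
      rw [hJ0, hsz] at this
      exact this.symm
    -- a ∨ ¬(J a) = 1
    have ht : ∀ a : α, sup a (neg (J a)) = one := by
      intro a
      have h1 : sup (sup a (J a)) (neg (J a)) = one := by rw [K3, K9, hone]
      rwa [hB] at h1
    -- a ∧ 1 = a
    have hm1 : ∀ a : α, meet a one = a := by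
      intro a
      rw [hm, K8, K4, hsz, K4]
    -- J a ∧ a = J a
    have key : ∀ a : α, meet (J a) a = J a := by
      intro a
      rw [← K6 (J a) a, K2 (neg (J a)) a, ht a, hm1]
    -- meet is commutative
    have hmc : ∀ a b : α, meet a b = meet b a := fun a b => by rw [hm, hm, K2]
    calc J x = meet (J x) x := (key x).symm
      _ = meet x (J x) := hmc _ _
      _ = x := K11 x
end

section
/- In a K-algebra A, an element a belongs to D(A) := {x : J₂x = 0} if and only if there exists b with a = b ∧ ¬b. -/
open KOps

/-- a ∈ D(A) iff a = b ∧ ¬b for some b. -/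
theorem stmt13 {α : Type*} [KOps α] [KAlgebra α] (a : α) :
    a ∈ {x : α | J x = zero} ↔ ∃ b : α, a = meet b (neg b) := by
  open KAlgebra in
  constructor
  · intro h
    simp only [Set.mem_setOf_eq] at h
    refine ⟨a, ?_⟩
    set j : α := J (sup (neg a) a) with hj
    have step1 : sup (neg a) j = neg a := by
      have := K10 (neg a) a
      rw [h, K2 (neg a) zero, K7] at this
      exact this.symm
    calc a = meet a (J a) := (K11 a).symm
      _ = neg (sup (neg a) (neg (J a))) := K5 a (J a)
      _ = neg (sup (neg a) (neg zero)) := by rw [h]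
      _ = neg (sup (neg a) one) := by rw [← K8]
      _ = neg (sup (neg a) (sup j (neg j))) := by rw [K9 (sup (neg a) a)]
      _ = neg (sup (sup (neg a) j) (neg j)) := by rw [K3]
      _ = neg (sup (neg a) (neg j)) := by rw [step1]
      _ = meet a j := (K5 a j).symm
      _ = meet a (sup (neg a) j) := (K6 a j).symm
      _ = meet a (neg a) := by rw [step1]
  · rintro ⟨b, rfl⟩
    exact K12 b
end

section
/- In every K-algebra satisfying additionally J₂¬x = ¬J₂x for all x, the set O(A) = {x : J₂x = x} contains 1 and is closed under ¬ and ∨, and the ⟨∨,¬,0,1⟩-structure on O(A) is a Boolean algebra. -/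
open KOps

namespace KAux

open KAlgebra

variable {α : Type*} [KOps α] [KAlgebra α]

instance : Std.Commutative (α := α) sup := ⟨K2⟩
instance : Std.Associative (α := α) sup := ⟨K3⟩

lemma neg_inj {x y : α} (h : neg x = neg y) : x = y := by
  rw [← K4 x, h, K4]

lemma neg_one : neg (one : α) = zero := by rw [K8, K4]

lemma neg_zero : neg (zero : α) = one := K8.symm

lemma sup_zero (x : α) : sup x zero = x := by rw [K2, K7]

lemma neg_meet (x y : α) : neg (meet x y) = sup (neg x) (neg y) := by
  rw [K5, K4]

lemma meet_neg_neg (x y : α) : meet (neg x) (neg y) = neg (sup x y) := by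
  rw [K5, K4, K4]

lemma meet_comm (x y : α) : meet x y = meet y x := by
  rw [K5, K5, K2]

lemma meet_assoc (x y z : α) : meet (meet x y) z = meet x (meet y z) := by
  apply neg_inj
  rw [neg_meet, neg_meet, neg_meet, neg_meet, K3]

instance : Std.Commutative (α := α) meet := ⟨meet_comm⟩
instance : Std.Associative (α := α) meet := ⟨meet_assoc⟩

lemma meet_idem (x : α) : meet x x = x := by
  rw [K5, K1, K4]

lemma meet_one (x : α) : meet x one = x := by
  rw [K5, neg_one, sup_zero, K4]

lemma one_meet (x : α) : meet one x = x := by rw [meet_comm, meet_one]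

lemma dualK6 (x y : α) : sup x (meet (neg x) y) = sup x y := by
  have h := K6 (neg x) (neg y)
  rw [K4] at h
  have h2 : neg (meet (neg x) (sup x (neg y))) = neg (meet (neg x) (neg y)) := by rw [h]
  rw [neg_meet, K4, neg_meet, K4, K4] at h2
  calc sup x (meet (neg x) y)
      = sup x (neg (sup x (neg y))) := by
        rw [← meet_neg_neg, K4]
    _ = sup x y := h2

/-- `x` is "nice" when `x ∨ ¬x = 1`. -/
def Nice (x : α) : Prop := sup x (neg x) = one

lemma nice_eq {x : α} (hx : Nice x) : sup x (neg x) = one := hx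

lemma nice_J (x : α) : Nice (J x : α) := K9 x

lemma nice_of_J {x : α} (h : J x = x) : Nice x :=
  show sup x (neg x) = one by
    have := K9 x; rwa [h] at this

lemma nice_neg {x : α} (hx : Nice x) : Nice (neg x) := by
  show sup (neg x) (neg (neg x)) = one
  rw [K4, K2]; exact hx

lemma sup_one {x : α} (hx : Nice x) : sup x one = one := by
  rw [← nice_eq hx, ← K3, K1]

lemma one_sup {x : α} (hx : Nice x) : sup one x = one := by
  rw [K2]; exact sup_one hx

lemma meet_self_neg {x : α} (hx : Nice x) : meet x (neg x) = zero := by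
  rw [K5, K4, K2, nice_eq hx, neg_one]

lemma meet_zero {x : α} (hx : Nice x) : meet x zero = zero := by
  rw [K5, neg_zero, sup_one (nice_neg hx), neg_one]

lemma zero_meet {x : α} (hx : Nice x) : meet zero x = zero := by
  rw [meet_comm]; exact meet_zero hx

lemma nice_sup {x y : α} (hx : Nice x) (hy : Nice y) : Nice (sup x y) := by
  show sup (sup x y) (neg (sup x y)) = one
  rw [← meet_neg_neg]
  have h1 : sup (sup x y) (meet (neg x) (neg y)) =
      sup y (sup x (meet (neg x) (neg y))) := by ac_rfl
  rw [h1, dualK6, show sup y (sup x (neg y)) = sup x (sup y (neg y)) from by ac_rfl,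
    nice_eq hy, sup_one hx]

lemma nice_meet {x y : α} (hx : Nice x) (hy : Nice y) : Nice (meet x y) := by
  rw [K5]
  exact nice_neg (nice_sup (nice_neg hx) (nice_neg hy))

lemma absorb1 {x y : α} (hx : Nice x) (hy : Nice y) : meet x (sup x y) = x := by
  have h := K6 x (sup x y)
  rw [← K3, K2 (neg x) x, nice_eq hx, one_sup hy, meet_one] at h
  exact h.symm

lemma absorb2 {x y : α} (hx : Nice x) (hy : Nice y) : sup x (meet x y) = x := by
  have h := dualK6 x (meet x y)
  rw [← meet_assoc, meet_comm (neg x) x, meet_self_neg hx, zero_meet hy, sup_zero] at h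
  exact h.symm

/-- If `z ∧ ¬y = 0` then `z ≤ y`. -/
lemma le_of_meet_neg {y z : α} (h : meet z (neg y) = zero) : sup y z = y := by
  rw [← dualK6 y z, meet_comm, h, sup_zero]

/-- If `x ≤ y` (both nice) then `x ∧ ¬y = 0`. -/
lemma meet_neg_of_le {x y : α} (hx : Nice x) (hy : Nice y) (h : sup y x = y) :
    meet x (neg y) = zero := by
  have hxy : meet x y = x := by
    conv_lhs => rw [← h, K2]
    exact absorb1 hx hy
  rw [← hxy, meet_assoc, meet_self_neg hy, meet_zero hx]

lemma distrib {a b c : α} (ha : Nice a) (hb : Nice b) (hc : Nice c) :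
    meet a (sup b c) = sup (meet a b) (meet a c) := by
  set u := meet a (sup b c) with hu_def
  set d := sup (meet a b) (meet a c) with hd_def
  have hbc : Nice (sup b c) := nice_sup hb hc
  have hu : Nice u := nice_meet ha hbc
  have hab : Nice (meet a b) := nice_meet ha hb
  have hac : Nice (meet a c) := nice_meet ha hc
  have hd : Nice d := nice_sup hab hac
  -- d ≤ u
  have h1 : meet a b = meet u b := by
    rw [hu_def, meet_assoc]
    congr 1
    rw [meet_comm]
    exact (absorb1 hb hc).symm
  have h2 : meet a c = meet u c := by
    rw [hu_def, meet_assoc]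
    congr 1
    rw [meet_comm, K2]
    exact (absorb1 hc hb).symm
  have hdu : sup u d = u := by
    rw [hd_def, h1, h2, ← K3, absorb2 hu hb, absorb2 hu hc]
  -- u ≤ d
  set t := meet u (neg d) with ht_def
  have ht : Nice t := nice_meet hu (nice_neg hd)
  have habd : meet (meet a b) (neg d) = zero := by
    apply meet_neg_of_le hab hd
    rw [hd_def, K2, ← K3, K1]
  have hacd : meet (meet a c) (neg d) = zero := by
    apply meet_neg_of_le hac hd
    rw [hd_def, K3, K1]
  have htb : meet t b = zero := by
    have e : meet t b = meet (meet (meet a b) (neg d)) (sup b c) := by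
      rw [ht_def, hu_def]; ac_rfl
    rw [e, habd, zero_meet hbc]
  have htc : meet t c = zero := by
    have e : meet t c = meet (meet (meet a c) (neg d)) (sup b c) := by
      rw [ht_def, hu_def]; ac_rfl
    rw [e, hacd, zero_meet hbc]
  have htb' : meet t (neg b) = t := by
    have h := le_of_meet_neg (y := neg b) (z := t) (by rw [K4]; exact htb)
    rw [K2 (neg b) t] at h
    calc meet t (neg b) = meet t (sup t (neg b)) := by rw [h]
      _ = t := absorb1 ht (nice_neg hb)
  have htc' : meet t (neg c) = t := by
    have h := le_of_meet_neg (y := neg c) (z := t) (by rw [K4]; exact htc)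
    rw [K2 (neg c) t] at h
    calc meet t (neg c) = meet t (sup t (neg c)) := by rw [h]
      _ = t := absorb1 ht (nice_neg hc)
  have htbc : meet t (neg (sup b c)) = t := by
    rw [← meet_neg_neg, ← meet_assoc, htb', htc']
  have ht0 : t = zero := by
    have e : t = meet t (sup b c) := by
      rw [ht_def, hu_def]
      have h' : meet (meet (meet a (sup b c)) (neg d)) (sup b c)
          = meet (meet a (meet (sup b c) (sup b c))) (neg d) := by ac_rfl
      rw [h', meet_idem]
    calc t = meet t (sup b c) := e
      _ = meet (meet t (neg (sup b c))) (sup b c) := by rw [htbc]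
      _ = meet t (meet (sup b c) (neg (sup b c))) := by ac_rfl
      _ = meet t zero := by rw [meet_self_neg hbc]
      _ = zero := meet_zero ht
  have hud : sup d u = d := le_of_meet_neg (by rw [← ht_def]; exact ht0)
  calc u = sup u d := hdu.symm
    _ = sup d u := K2 _ _
    _ = d := hud

lemma J_one : J (one : α) = one := by
  have h := K11 (one : α)
  rwa [one_meet] at h

lemma J_zero (hJ : ∀ x : α, J (neg x) = neg (J x)) : J (zero : α) = zero := by
  rw [← neg_one, hJ, J_one, neg_one]

lemma J_neg (hJ : ∀ x : α, J (neg x) = neg (J x)) {x : α} (hx : J x = x) :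
    J (neg x) = neg x := by rw [hJ, hx]

lemma J_sup {x y : α} (hx : J x = x) (hy : J y = y) : J (sup x y) = sup x y := by
  set z := sup x y with hz
  have h1 : sup x (J z) = z := by rw [hz, ← K10, hy]
  have h2 : sup (J z) z = z := by
    calc sup (J z) z = sup (sup x (J z)) y := by rw [hz]; ac_rfl
      _ = sup z y := by rw [h1]
      _ = z := by rw [hz, K3, K1]
  have h3 : meet z (J z) = z := K11 z
  have nz : Nice z := by rw [hz]; exact nice_sup (nice_of_J hx) (nice_of_J hy)
  have nJz : Nice (J z : α) := nice_J z
  have h4 : sup (J z) z = J z := by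
    calc sup (J z) z = sup (J z) (meet (J z) z) := by rw [meet_comm, h3]
      _ = J z := absorb2 nJz nz
  rw [← h4, h2]

lemma J_meet (hJ : ∀ x : α, J (neg x) = neg (J x)) {x y : α}
    (hx : J x = x) (hy : J y = y) : J (meet x y) = meet x y := by
  rw [K5]
  exact J_neg hJ (J_sup (J_neg hJ hx) (J_neg hJ hy))

end KAux

/-- If additionally J₂¬x = ¬J₂x, then O(A) = {x : J₂x = x} contains 1, is closed
under ¬ and ∨, and carries a Boolean algebra structure whose join, complement,
bottom and top are the operations induced from the K-algebra. -/
theorem stmt15 {α : Type*} [KOps α] [KAlgebra α]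
    (hJ : ∀ x : α, J (neg x) = neg (J x)) :
    J (one : α) = one ∧
    (∀ x : α, J x = x → J (neg x) = neg x) ∧
    (∀ x y : α, J x = x → J y = y → J (sup x y) = sup x y) ∧
    ∃ B : BooleanAlgebra {x : α // J x = x},
      (∀ a b : {x : α // J x = x}, ((B.sup a b : {x : α // J x = x}) : α) = sup (a : α) (b : α)) ∧
      (∀ a : {x : α // J x = x}, ((B.compl a : {x : α // J x = x}) : α) = neg (a : α)) ∧
      ((B.bot : {x : α // J x = x}) : α) = zero ∧
      ((B.top : {x : α // J x = x}) : α) = one := by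
  refine ⟨KAux.J_one, fun x hx => KAux.J_neg hJ hx,
    fun x y hx hy => KAux.J_sup hx hy, ?_⟩
  letI : Max {x : α // J x = x} := ⟨fun a b => ⟨sup a.1 b.1, KAux.J_sup a.2 b.2⟩⟩
  letI : Min {x : α // J x = x} := ⟨fun a b => ⟨meet a.1 b.1, KAux.J_meet hJ a.2 b.2⟩⟩
  have nice : ∀ a : {x : α // J x = x}, KAux.Nice a.1 := fun a => KAux.nice_of_J a.2
  letI lat : Lattice {x : α // J x = x} := Lattice.mk'
    (fun a b => Subtype.ext (KAlgebra.K2 a.1 b.1))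
    (fun a b c => Subtype.ext (KAlgebra.K3 a.1 b.1 c.1))
    (fun a b => Subtype.ext (KAux.meet_comm a.1 b.1))
    (fun a b c => Subtype.ext (KAux.meet_assoc a.1 b.1 c.1))
    (fun a b => Subtype.ext (KAux.absorb2 (nice a) (nice b)))
    (fun a b => Subtype.ext (KAux.absorb1 (nice a) (nice b)))
  letI dl : DistribLattice {x : α // J x = x} := DistribLattice.ofInfSupLe
    (fun a b c => le_of_eq (Subtype.ext (KAux.distrib (nice a) (nice b) (nice c))))
  letI B : BooleanAlgebra {x : α // J x = x} :=
  { dl with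
    compl := fun a => ⟨neg a.1, KAux.J_neg hJ a.2⟩
    top := ⟨one, KAux.J_one⟩
    bot := ⟨zero, KAux.J_zero hJ⟩
    le_top := fun a => sup_eq_right.1 (Subtype.ext (KAux.sup_one (nice a)))
    bot_le := fun a => sup_eq_right.1 (Subtype.ext (KAlgebra.K7 a.1))
    inf_compl_le_bot := fun a => le_of_eq (Subtype.ext (KAux.meet_self_neg (nice a)))
    top_le_sup_compl := fun a => le_of_eq (Subtype.ext (KAux.nice_eq (nice a)).symm) }
  exact ⟨B, fun a b => rfl, fun a => rfl, rfl, rfl⟩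
end

section
/- Let A be a K-algebra satisfying additionally J₂¬x = ¬J₂x for all x. Then the map φ(a) := (J₂a, a ∧ ¬a) preserves the operations ¬, ∨ and J₂ into the product: J₂(¬a) = ¬(J₂a), (¬a) ∧ (¬¬a) = a ∧ ¬a, J₂(a∨b) = J₂a ∨ J₂b considered in O(A), (a∨b) ∧ ¬(a∨b) = (a∧¬a) ∨ (b∧¬b), J₂(J₂a) = J₂a, and J₂a ∧ ¬J₂a = 0. -/
open KOps

namespace KAlgebraAux

open KAlgebra

variable {α : Type*} [KOps α] [KAlgebra α]

private lemma nneg (x : α) : neg (neg x) = x := K4 x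
private lemma sup_idem (x : α) : sup x x = x := K1 x
private lemma sc (x y : α) : sup x y = sup y x := K2 x y
private lemma sa (x y z : α) : sup (sup x y) z = sup x (sup y z) := K3 x y z
private lemma zero_sup (x : α) : sup zero x = x := K7 x
private lemma sup_zero (x : α) : sup x zero = x := by rw [sc, zero_sup]
private lemma neg_one : (neg one : α) = zero := by rw [K8, nneg]
private lemma neg_zero' : (neg zero : α) = one := K8.symm
private lemma neg_meet (x y : α) : neg (meet x y) = sup (neg x) (neg y) := by
  rw [K5 x y, nneg]
private lemma neg_sup (x y : α) : neg (sup x y) = meet (neg x) (neg y) := by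
  rw [K5 (neg x) (neg y), nneg, nneg]
private lemma mc (x y : α) : meet x y = meet y x := by
  rw [K5 x y, K5 y x, sc (neg x) (neg y)]
private lemma ma (x y z : α) : meet (meet x y) z = meet x (meet y z) := by
  simp only [K5, nneg]
  rw [sa]
private lemma meet_idem (x : α) : meet x x = x := by rw [K5, sup_idem, nneg]
private lemma meet_one (x : α) : meet x one = x := by
  rw [K5, neg_one, sup_zero, nneg]
private lemma one_meet (x : α) : meet one x = x := by rw [mc, meet_one]
private lemma K6n (x y : α) : meet (neg x) (sup x y) = meet (neg x) y := by
  have h := K6 (neg x) y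
  rwa [nneg] at h
private lemma D2 (x y : α) : sup x (meet (neg x) y) = sup x y := by
  have h : neg (sup x (meet (neg x) y)) = neg (sup x y) := by
    rw [neg_sup, neg_meet, nneg, K6n, ← neg_sup]
  have h2 := congrArg neg h
  rwa [nneg, nneg] at h2

private lemma absorb (z w : α) (h : sup (neg z) w = one) : sup w z = w := by
  have h0 : meet (neg w) z = zero := by
    rw [K5, nneg, sc, h, neg_one]
  calc sup w z = sup w (meet (neg w) z) := (D2 w z).symm
    _ = w := by rw [h0, sup_zero]

private lemma L1 (hJ : ∀ x : α, J (neg x) = neg (J x)) (x : α) :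
    sup x (J x) = x := by
  have h := congrArg neg (K11 (neg x))
  rw [neg_meet, hJ] at h
  simp only [nneg] at h
  exact h

private lemma J_one : J (one : α) = one := by
  have h := K11 (one : α)
  rwa [one_meet] at h

private lemma sup_J_one (x : α) : sup (J x) one = one := by
  conv_lhs => rw [← K9 x]
  rw [← sa, sup_idem, K9]

private lemma sup_negJ_one (x : α) : sup (neg (J x)) one = one := by
  conv_lhs => rw [← K9 x]
  rw [sc (J x) (neg (J x)), ← sa, sup_idem, sc, K9]

private lemma L6 (hJ : ∀ x : α, J (neg x) = neg (J x)) (y : α) :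
    J (sup one y) = one := by
  have h0 : meet (neg (sup one y)) zero = neg (sup one y) := by
    rw [K5, nneg, neg_zero', sa, sc y one, ← sa, sup_idem]
  have h6 := K6 (neg (sup one y)) (zero : α)
  rw [nneg, sup_zero] at h6
  have h1 : meet (neg (sup one y)) (neg (neg (sup one y))) = neg (sup one y) := by
    rw [nneg, h6, h0]
  have h2 : J (neg (sup one y)) = zero := by
    conv_lhs => rw [← h1]
    exact K12 (neg (sup one y))
  have h3 : neg (J (sup one y)) = zero := by rw [← hJ (sup one y), h2]
  have h4 := congrArg neg h3
  rwa [nneg, neg_zero'] at h4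

private lemma JJ (hJ : ∀ x : α, J (neg x) = neg (J x)) (x : α) :
    J (J x) = J x := by
  have hK9' : sup (neg (J x)) (J x) = one := by rw [sc, K9]
  have h := K10 (neg (J x)) (J x)
  rw [hK9', J_one, sup_negJ_one] at h
  have h3 := absorb (J x) (J (J x)) h
  calc J (J x) = sup (J (J x)) (J x) := h3.symm
    _ = sup (J x) (J (J x)) := sc _ _
    _ = J x := L1 hJ (J x)

private lemma L7 (hJ : ∀ x : α, J (neg x) = neg (J x)) (a b : α) :
    sup (J a) (J b) = J (sup (J a) b) := by
  have h2 : sup (neg (J a)) (J (sup (J a) b)) = one := by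
    have h := K10 (neg (J a)) (sup (J a) b)
    rw [← sa, sc (neg (J a)) (J a), K9, L6 hJ b, sup_negJ_one] at h
    exact h
  have h3 := absorb (J a) (J (sup (J a) b)) h2
  calc sup (J a) (J b) = sup (J a) (J (sup (J a) b)) := K10 (J a) b
    _ = sup (J (sup (J a) b)) (J a) := sc _ _
    _ = J (sup (J a) b) := h3

private lemma hea_gen (hJ : ∀ x : α, J (neg x) = neg (J x)) (a b : α) :
    sup (neg (J a)) (J (sup a b)) = one := by
  have hna : sup one a = sup (neg (J a)) a := by
    rw [← K9 a, sa, sc (neg (J a)) a, ← sa, sc (J a) a, L1 hJ a]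
  have h := K10 (neg (J a)) (sup a b)
  rw [← sa, ← hna, sa, L6 hJ (sup a b), sup_negJ_one] at h
  exact h

private lemma goal3 (hJ : ∀ x : α, J (neg x) = neg (J x)) (a b : α) :
    J (sup a b) = sup (J a) (J b) := by
  have hea := hea_gen hJ a b
  have heb : sup (neg (J b)) (J (sup a b)) = one := by
    have h := hea_gen hJ b a
    rwa [sc b a] at h
  have h3 := absorb (J a) (J (sup a b)) hea
  have h4 := absorb (J b) (J (sup a b)) heb
  have hef : sup (J (sup a b)) (sup (J a) (J b)) = J (sup a b) := by
    rw [← sa, h3, h4]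
  have hba : sup (J a) b = sup b (J (sup a b)) := by
    rw [sc (J a) b, K10 b a, sc b a]
  have e3 : sup (neg (J (sup a b))) (sup b (J (sup a b))) = sup one b := by
    rw [sc b (J (sup a b)), ← sa, sc (neg (J (sup a b))) (J (sup a b)), K9]
  have key : sup (neg (J (sup a b))) (sup (J a) (J b)) = one := by
    have h := K10 (neg (J (sup a b))) (sup b (J (sup a b)))
    rw [e3, L6 hJ b, sup_negJ_one] at h
    rw [L7 hJ a b, hba]
    exact h
  have h6 := absorb (J (sup a b)) (sup (J a) (J b)) key
  calc J (sup a b) = sup (J (sup a b)) (sup (J a) (J b)) := hef.symm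
    _ = sup (sup (J a) (J b)) (J (sup a b)) := sc _ _
    _ = sup (J a) (J b) := h6

/-- `y ∧ ¬y` is a "nil" element: `s ∧ ¬s = s`. -/
private lemma Lnil (y : α) :
    meet (meet y (neg y)) (neg (meet y (neg y))) = meet y (neg y) := by
  rw [neg_meet, nneg, mc y (neg y), ma, K6 y y, meet_idem]

/-- Key lemma: `(x ∧ ¬x) ∧ (y ∧ ¬y) = ¬x ∧ (y ∧ ¬y)`. -/
private lemma L8 (x y : α) :
    meet (meet x (neg x)) (meet y (neg y)) = meet (neg x) (meet y (neg y)) := by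
  have hnw : neg (meet (neg x) (meet y (neg y)))
      = sup x (neg (meet y (neg y))) := by
    rw [neg_meet, nneg]
  have hA : meet (meet (neg x) (meet y (neg y)))
      (neg (meet (neg x) (meet y (neg y)))) = meet (neg x) (meet y (neg y)) := by
    rw [hnw, mc (neg x) (meet y (neg y)), ma, K6n x (neg (meet y (neg y))),
      mc (neg x) (neg (meet y (neg y))), ← ma, Lnil y]
  have hB : meet (meet (neg x) (meet y (neg y))) x
      = meet (neg x) (meet y (neg y)) := by
    have h := K6 (meet (neg x) (meet y (neg y))) x
    rw [hnw] at h
    have e : sup (sup x (neg (meet y (neg y)))) x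
        = sup x (neg (meet y (neg y))) := by
      rw [sa, sc (neg (meet y (neg y))) x, ← sa, sup_idem]
    rw [e, ← hnw, hA] at h
    exact h.symm
  calc meet (meet x (neg x)) (meet y (neg y))
      = meet x (meet (neg x) (meet y (neg y))) := ma _ _ _
    _ = meet (meet (neg x) (meet y (neg y))) x := mc _ _
    _ = meet (neg x) (meet y (neg y)) := hB

private lemma goal4 (a b : α) :
    meet (sup a b) (neg (sup a b))
      = sup (meet a (neg a)) (meet b (neg b)) := by
  have lhs1 : meet (sup a b) (neg (sup a b)) = meet (neg a) (meet b (neg b)) := by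
    rw [neg_sup, mc (sup a b) (meet (neg a) (neg b)), mc (neg a) (neg b), ma,
      K6n a b, mc (neg a) b, ← ma, mc (neg b) b, mc (meet b (neg b)) (neg a)]
  have h1 : meet (neg (meet a (neg a))) (meet b (neg b))
      = meet (meet a (neg a)) (meet b (neg b)) := by
    have h := L8 (meet a (neg a)) b
    rw [Lnil a] at h
    exact h.symm
  have h2 : meet (neg (meet (meet a (neg a)) (meet b (neg b)))) (meet a (neg a))
      = meet (meet a (neg a)) (meet b (neg b)) := by
    rw [neg_meet,
      mc (sup (neg (meet a (neg a))) (neg (meet b (neg b)))) (meet a (neg a)),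
      K6, mc (meet a (neg a)) (neg (meet b (neg b)))]
    have h8 := L8 (meet b (neg b)) a
    rw [Lnil b] at h8
    rw [← h8]
    exact mc _ _
  have d1 : sup (meet a (neg a)) (meet b (neg b))
      = sup (meet a (neg a)) (meet (meet a (neg a)) (meet b (neg b))) := by
    calc sup (meet a (neg a)) (meet b (neg b))
        = sup (meet a (neg a)) (meet (neg (meet a (neg a))) (meet b (neg b))) :=
          (D2 _ _).symm
      _ = sup (meet a (neg a)) (meet (meet a (neg a)) (meet b (neg b))) := by
          rw [h1]
  have d2 : sup (meet a (neg a)) (meet (meet a (neg a)) (meet b (neg b)))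
      = meet (meet a (neg a)) (meet b (neg b)) := by
    have h := D2 (meet (meet a (neg a)) (meet b (neg b))) (meet a (neg a))
    rw [h2, sup_idem] at h
    calc sup (meet a (neg a)) (meet (meet a (neg a)) (meet b (neg b)))
        = sup (meet (meet a (neg a)) (meet b (neg b))) (meet a (neg a)) := sc _ _
      _ = meet (meet a (neg a)) (meet b (neg b)) := h.symm
  calc meet (sup a b) (neg (sup a b)) = meet (neg a) (meet b (neg b)) := lhs1
    _ = meet (meet a (neg a)) (meet b (neg b)) := (L8 a b).symm
    _ = sup (meet a (neg a)) (meet b (neg b)) := (d1.trans d2).symm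

end KAlgebraAux

open KAlgebra KAlgebraAux in
/-- φ(a) = (J₂a, a ∧ ¬a) preserves the operations ¬, ∨ and J₂ coordinatewise. -/
theorem stmt17 {α : Type*} [KOps α] [KAlgebra α]
    (hJ : ∀ x : α, J (neg x) = neg (J x)) (a b : α) :
    J (neg a) = neg (J a) ∧
    meet (neg a) (neg (neg a)) = meet a (neg a) ∧
    J (sup a b) = sup (J a) (J b) ∧
    meet (sup a b) (neg (sup a b)) = sup (meet a (neg a)) (meet b (neg b)) ∧
    J (J a) = J a ∧
    meet (J a) (neg (J a)) = zero := by
  refine ⟨hJ a, ?_, KAlgebraAux.goal3 hJ a b, KAlgebraAux.goal4 a b,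
    KAlgebraAux.JJ hJ a, ?_⟩
  · rw [K4, KAlgebraAux.mc]
  · rw [K5, K4, K2, K9, KAlgebraAux.neg_one]
end
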